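/- Let M be a von Neumann algebra acting on a complex Hilbert space H and let P, Q : M → M be normal, unital, completely positive linear maps. If Y ∈ B(H) satisfies the P-boundedness condition with constant C_Y and Z ∈ B(H) satisfies the Q-boundedness condition with constant C_Z, then the product YZ satisfies the (P∘Q)-boundedness condition with constant C_Y·C_Z; that is, for all S_1,…,S_n ∈ M and h_1,…,h_n ∈ H, ‖∑_i S_i (YZ)* h_i‖² ≤ C_Y C_Z ∑_{i,j} ⟨h_i, P(Q(S_i* S_j)) h_j⟩. In particular E_P · E_Q ⊆ E_{P∘Q}. -/

import Mathlib

open scoped ComplexOrder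
open ContinuousLinearMap

noncomputable section

/-- Positivity of an `n × n` operator matrix `(a i j)`, regarded as an operator on the
`n`-fold direct sum `Hⁿ`: `∑ᵢⱼ ⟨kᵢ, a i j kⱼ⟩ ≥ 0` for all `k₁, …, kₙ ∈ H`. -/
def PosOpMatrix {H : Type*} [NormedAddCommGroup H] [InnerProductSpace ℂ H] {n : ℕ}
    (a : Fin n → Fin n → (H →L[ℂ] H)) : Prop :=
  ∀ k : Fin n → H, 0 ≤ ∑ i, ∑ j, (inner ℂ (k i) (a i j (k j)) : ℂ)

/-- Complete positivity of a map relative to a von Neumann algebra `M`: positive operator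
matrices with entries in `M` are sent to positive operator matrices. -/
def IsCPOn {H : Type*} [NormedAddCommGroup H] [InnerProductSpace ℂ H] [CompleteSpace H]
    (M : VonNeumannAlgebra H) (P : (H →L[ℂ] H) → (H →L[ℂ] H)) : Prop :=
  ∀ (n : ℕ) (a : Fin n → Fin n → (H →L[ℂ] H)),
    (∀ i j, a i j ∈ M) → PosOpMatrix a → PosOpMatrix fun i j => P (a i j)

/-- Weak-operator continuity of a map on bounded subsets of `s`; for bounded linear maps on
von Neumann algebras this captures normality (σ-weak continuity). -/
def WOTContinuousOnBalls {H K : Type*} [NormedAddCommGroup H] [InnerProductSpace ℂ H]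
    [NormedAddCommGroup K] [InnerProductSpace ℂ K]
    (s : Set (H →L[ℂ] H)) (f : (H →L[ℂ] H) → (K →L[ℂ] K)) : Prop :=
  ∀ r : ℝ, ContinuousOn
    (fun T : H →WOT[ℂ] H =>
      (ContinuousLinearMapWOT.linearEquiv (σ := RingHom.id ℂ) (E := K) (F := K) ℂ).symm (f ((((ContinuousLinearMapWOT.linearEquiv (σ := RingHom.id ℂ) (E := H) (F := H) ℂ).symm).symm) T)))
    ((ContinuousLinearMapWOT.linearEquiv (σ := RingHom.id ℂ) (E := H) (F := H) ℂ).symm '' (s ∩ Metric.closedBall 0 r))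

/-- The closure of a set of operators in the weak operator topology. -/
def WOTClosure {H K : Type*} [NormedAddCommGroup H] [InnerProductSpace ℂ H]
    [NormedAddCommGroup K] [InnerProductSpace ℂ K] (s : Set (H →L[ℂ] K)) : Set (H →L[ℂ] K) :=
  (ContinuousLinearMapWOT.linearEquiv (σ := RingHom.id ℂ) (E := H) (F := K) ℂ).symm ⁻¹' closure ((ContinuousLinearMapWOT.linearEquiv (σ := RingHom.id ℂ) (E := H) (F := K) ℂ).symm '' s)

/-- A unital normal `*`-representation of (the elements of) a von Neumann algebra `M` on a
Hilbert space `K`, encoded as a function on all of `B(H)` whose properties are imposed only on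
members of `M`. -/
structure IsNormalRepOn {H K : Type*} [NormedAddCommGroup H] [InnerProductSpace ℂ H]
    [CompleteSpace H] [NormedAddCommGroup K] [InnerProductSpace ℂ K] [CompleteSpace K]
    (M : VonNeumannAlgebra H) (π : (H →L[ℂ] H) → (K →L[ℂ] K)) : Prop where
  map_add : ∀ S ∈ M, ∀ T ∈ M, π (S + T) = π S + π T
  map_smul : ∀ (c : ℂ), ∀ T ∈ M, π (c • T) = c • π T
  map_mul : ∀ S ∈ M, ∀ T ∈ M, π (S * T) = π S * π T
  map_star : ∀ T ∈ M, π (star T) = star (π T)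
  map_one : π 1 = 1
  normal : WOTContinuousOnBalls (M : Set (H →L[ℂ] H)) π

/-- A completely positive linear map of a von Neumann algebra `M` into itself. -/
structure IsCPMapOn {H : Type*} [NormedAddCommGroup H] [InnerProductSpace ℂ H] [CompleteSpace H]
    (M : VonNeumannAlgebra H) (P : (H →L[ℂ] H) → (H →L[ℂ] H)) : Prop where
  map_mem : ∀ T ∈ M, P T ∈ M
  map_add : ∀ S ∈ M, ∀ T ∈ M, P (S + T) = P S + P T
  map_smul : ∀ (c : ℂ), ∀ T ∈ M, P (c • T) = c • P T
  cp : IsCPOn M P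

/-- A normal, unital, completely positive map on a von Neumann algebra `M`. -/
structure IsUNCPMapOn {H : Type*} [NormedAddCommGroup H] [InnerProductSpace ℂ H] [CompleteSpace H]
    (M : VonNeumannAlgebra H) (P : (H →L[ℂ] H) → (H →L[ℂ] H))
    extends IsCPMapOn M P : Prop where
  map_one : P 1 = 1
  normal : WOTContinuousOnBalls (M : Set (H →L[ℂ] H)) P

/-- A Stinespring triple `(π, K, W)` for `P`: `π` is a unital normal `*`-representation of `M`
on `K`, `W : H → K` is an isometry, and `P T = W* (π T) W` for `T ∈ M`. -/
structure IsStinespring {H K : Type*} [NormedAddCommGroup H] [InnerProductSpace ℂ H]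
    [CompleteSpace H] [NormedAddCommGroup K] [InnerProductSpace ℂ K] [CompleteSpace K]
    (M : VonNeumannAlgebra H) (P : (H →L[ℂ] H) → (H →L[ℂ] H))
    (π : (H →L[ℂ] H) → (K →L[ℂ] K)) (W : H →L[ℂ] K) : Prop where
  rep : IsNormalRepOn M π
  isometry : ∀ h : H, ‖W h‖ = ‖h‖
  dilation : ∀ T ∈ M, P T = ContinuousLinearMap.adjoint W ∘L (π T ∘L W)

/-- A minimal Stinespring triple: additionally `{π(T) W h}` has dense span in `K`. -/
structure IsMinimalStinespring {H K : Type*} [NormedAddCommGroup H] [InnerProductSpace ℂ H]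
    [CompleteSpace H] [NormedAddCommGroup K] [InnerProductSpace ℂ K] [CompleteSpace K]
    (M : VonNeumannAlgebra H) (P : (H →L[ℂ] H) → (H →L[ℂ] H))
    (π : (H →L[ℂ] H) → (K →L[ℂ] K)) (W : H →L[ℂ] K)
    extends IsStinespring M P π W : Prop where
  minimal :
    (Submodule.span ℂ {k : K | ∃ T ∈ M, ∃ h : H, k = π T (W h)}).topologicalClosure = ⊤

/-- The `P`-boundedness condition with constant `C` for an operator `Y ∈ B(H)`:
`‖∑ᵢ Sᵢ Y* hᵢ‖² ≤ C ∑ᵢⱼ ⟨hᵢ, P(Sᵢ* Sⱼ) hⱼ⟩` for all `Sᵢ ∈ M` and `hᵢ ∈ H`. -/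
def PBound {H : Type*} [NormedAddCommGroup H] [InnerProductSpace ℂ H] [CompleteSpace H]
    (M : VonNeumannAlgebra H) (P : (H →L[ℂ] H) → (H →L[ℂ] H))
    (Y : H →L[ℂ] H) (C : ℝ) : Prop :=
  ∀ (n : ℕ) (S : Fin n → (H →L[ℂ] H)), (∀ i, S i ∈ M) → ∀ h : Fin n → H,
    ((‖∑ i, S i (ContinuousLinearMap.adjoint Y (h i))‖ ^ 2 : ℝ) : ℂ) ≤
      (C : ℂ) * ∑ i, ∑ j, (inner ℂ (h i) (P (star (S i) * S j) (h j)) : ℂ)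

/-- The Arveson correspondence of `P`: all `Y ∈ B(H)` satisfying the `P`-boundedness
condition with some nonnegative constant. -/
def ArvesonCorrespondence {H : Type*} [NormedAddCommGroup H] [InnerProductSpace ℂ H]
    [CompleteSpace H] (M : VonNeumannAlgebra H) (P : (H →L[ℂ] H) → (H →L[ℂ] H)) :
    Set (H →L[ℂ] H) :=
  {Y | ∃ C : ℝ, 0 ≤ C ∧ PBound M P Y C}

/-- A cp-semigroup on `M`: a semigroup `{P_t}_{t ≥ 0}` of unital, normal, completely positive
maps on `M` with `P_0 = id`. -/
structure IsCpSemigroup {H : Type*} [NormedAddCommGroup H] [InnerProductSpace ℂ H]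
    [CompleteSpace H] (M : VonNeumannAlgebra H)
    (P : ℝ → (H →L[ℂ] H) → (H →L[ℂ] H)) : Prop where
  uncp : ∀ t : ℝ, 0 ≤ t → IsUNCPMapOn M (P t)
  id_zero : ∀ T ∈ M, P 0 T = T
  comp : ∀ s t : ℝ, 0 ≤ s → 0 ≤ t → ∀ T ∈ M, P (t + s) T = P t (P s T)

/-- Weak continuity of a cp-semigroup: `t ↦ ⟨P_t(a) h, k⟩` is continuous on `[0, ∞)`. -/
def IsWeaklyContinuousSemigroup {H : Type*} [NormedAddCommGroup H] [InnerProductSpace ℂ H]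
    [CompleteSpace H] (M : VonNeumannAlgebra H)
    (P : ℝ → (H →L[ℂ] H) → (H →L[ℂ] H)) : Prop :=
  ∀ T ∈ M, ∀ h k : H,
    ContinuousOn (fun t : ℝ => (inner ℂ ((P t T) h) k : ℂ)) (Set.Ici (0 : ℝ))

/-- A semigroup `{α_t}_{t ≥ 0}` of unital, normal `*`-endomorphisms of a von Neumann
algebra `R`, with `α_0 = id`. -/
structure IsEndoSemigroup {K : Type*} [NormedAddCommGroup K] [InnerProductSpace ℂ K]
    [CompleteSpace K] (R : VonNeumannAlgebra K)
    (α : ℝ → (K →L[ℂ] K) → (K →L[ℂ] K)) : Prop where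
  rep : ∀ t : ℝ, 0 ≤ t → IsNormalRepOn R (α t)
  map_mem : ∀ t : ℝ, 0 ≤ t → ∀ S ∈ R, α t S ∈ R
  id_zero : ∀ S ∈ R, α 0 S = S
  comp : ∀ s t : ℝ, 0 ≤ s → 0 ≤ t → ∀ S ∈ R, α (t + s) S = α t (α s S)

section AuxPbound
set_option maxHeartbeats 1000000
set_option linter.unusedSectionVars false
set_option linter.unusedVariables false
namespace PboundAux
variable {H : Type*} [NormedAddCommGroup H] [InnerProductSpace ℂ H] [CompleteSpace H]
variable {n : ℕ}

local notation "Hn" => PiLp 2 (fun _ : Fin n => H)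

instance piLpComplete : CompleteSpace (PiLp 2 (fun _ : Fin n => H)) :=
  inferInstance

def prj (i : Fin n) : Hn →L[ℂ] H := PiLp.proj (𝕜 := ℂ) (p := 2) (β := fun _ : Fin n => H) i

def sgl (i : Fin n) : H →L[ℂ] Hn :=
  ((PiLp.continuousLinearEquiv 2 ℂ (fun _ : Fin n => H)).symm : (∀ _ : Fin n, H) →L[ℂ] Hn) ∘L
    (ContinuousLinearMap.pi fun j => if j = i then ContinuousLinearMap.id ℂ H else 0)

@[simp] lemma prj_apply (i : Fin n) (x : Hn) : prj i x = x i := rfl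

@[simp] lemma sgl_apply (i : Fin n) (h : H) (j : Fin n) :
    sgl (H := H) i h j = Pi.single (M := fun _ => H) i h j := by
  simp [sgl, Pi.single_apply, ContinuousLinearMap.pi_apply]
  split <;> simp_all

def opOf (a : Fin n → Fin n → (H →L[ℂ] H)) : Hn →L[ℂ] Hn :=
  ∑ i, ∑ j, (sgl i) ∘L ((a i j) ∘L (prj j))

lemma opOf_apply (a : Fin n → Fin n → (H →L[ℂ] H)) (x : Hn) (k : Fin n) :
    opOf a x k = ∑ j, a k j (x j) := by
  simp only [opOf, ContinuousLinearMap.sum_apply, ContinuousLinearMap.comp_apply, prj_apply]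
  rw [WithLp.ofLp_sum, Finset.sum_apply]
  simp only [WithLp.ofLp_sum, Finset.sum_apply]
  simp only [sgl_apply, Pi.single_apply]
  rw [Finset.sum_comm]
  simp

lemma inner_opOf (a : Fin n → Fin n → (H →L[ℂ] H)) (x y : Hn) :
    (inner ℂ x (opOf a y) : ℂ) = ∑ i, ∑ j, (inner ℂ (x i) (a i j (y j)) : ℂ) := by
  rw [PiLp.inner_apply]
  refine Finset.sum_congr rfl fun i _ => ?_
  rw [opOf_apply, inner_sum]

lemma opOf_nonneg {a : Fin n → Fin n → (H →L[ℂ] H)} (hpos : PosOpMatrix a) :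
    0 ≤ opOf a := by
  rw [ContinuousLinearMap.nonneg_iff_isPositive, ContinuousLinearMap.isPositive_iff_complex]
  intro x
  have h0 : 0 ≤ (inner ℂ x (opOf a x) : ℂ) := by rw [inner_opOf]; exact hpos x
  obtain ⟨hre, him⟩ := Complex.le_def.mp h0
  have hconj : (inner ℂ (opOf a x) x : ℂ) = inner ℂ x (opOf a x) := by
    rw [← inner_conj_symm]
    exact Complex.conj_eq_iff_im.mpr (by simpa using him.symm)
  constructor
  · rw [hconj]
    exact (Complex.conj_eq_iff_re.mp (Complex.conj_eq_iff_im.mpr (by simpa using him.symm)))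
  · rw [hconj]; simpa using hre

lemma cfc_mem_elemental {A : Type*} [CStarAlgebra A] (f : ℝ → ℝ) (hf : Continuous f)
    (a : A) (ha : IsSelfAdjoint a) : cfc f a ∈ StarAlgebra.elemental ℂ a := by
  rw [cfc_real_eq_complex f ha]
  have hcont : ContinuousOn (fun x : ℂ => (f x.re : ℂ)) (spectrum ℂ a) :=
    Continuous.continuousOn (by continuity)
  rw [cfc_apply (R := ℂ) _ a ha.isStarNormal hcont, cfcHom_eq_of_isStarNormal]
  exact SetLike.coe_mem _

lemma commute_of_mem_elemental {A : Type*} [CStarAlgebra A] {a D b : A}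
    (hmem : b ∈ StarAlgebra.elemental ℂ a) (ha : IsSelfAdjoint a) (hD : Commute D a) :
    Commute D b := by
  induction hmem using StarAlgebra.elemental.induction_on with
  | self => exact hD
  | star_self => rw [ha.star_eq]; exact hD
  | algebraMap r => exact (Algebra.commutes r D).symm
  | add u hu v hv h1 h2 => exact h1.add_right h2
  | mul u hu v hv h1 h2 => exact h1.mul_right h2
  | closure s hs hcomm v hv =>
      have hclosed : IsClosed {x : A | Commute D x} :=
        isClosed_eq (continuous_mul_left D) (continuous_mul_right D)
      exact closure_minimal (fun u hu => hcomm u hu) hclosed hv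

lemma commute_cfc {A : Type*} [CStarAlgebra A] (f : ℝ → ℝ) (hf : Continuous f)
    {a D : A} (ha : IsSelfAdjoint a) (hD : Commute D a) : Commute D (cfc f a) :=
  commute_of_mem_elemental (cfc_mem_elemental f hf a ha) ha hD

def DOf (T : H →L[ℂ] H) : Hn →L[ℂ] Hn := ∑ i, (sgl i) ∘L (T ∘L (prj i))

lemma DOf_apply (T : H →L[ℂ] H) (x : Hn) (k : Fin n) : DOf T x k = T (x k) := by
  simp only [DOf, ContinuousLinearMap.sum_apply, ContinuousLinearMap.comp_apply, prj_apply]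
  rw [WithLp.ofLp_sum, Finset.sum_apply]
  simp only [sgl_apply, Pi.single_apply]
  simp

lemma DOf_sgl (T : H →L[ℂ] H) (j : Fin n) (h : H) : DOf T (sgl j h) = sgl j (T h) := by
  ext k
  rw [DOf_apply]
  simp only [sgl_apply, Pi.single_apply]
  split <;> simp

lemma commute_DOf_opOf {M : VonNeumannAlgebra H} {a : Fin n → Fin n → (H →L[ℂ] H)}
    (haM : ∀ i j, a i j ∈ M) {T : H →L[ℂ] H} (hT : T ∈ M.commutant) :
    Commute (DOf T) (opOf a) := by
  have hc : ∀ i j (v : H), T ((a i j) v) = (a i j) (T v) := by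
    intro i j v
    have h := (VonNeumannAlgebra.mem_commutant_iff.mp hT) (a i j) (haM i j)
    have := congrFun (congrArg (fun (f : H →L[ℂ] H) => (f : H → H)) h) v
    simpa [ContinuousLinearMap.mul_apply] using this.symm
  rw [commute_iff_eq]
  ext x k
  rw [ContinuousLinearMap.mul_apply, ContinuousLinearMap.mul_apply, DOf_apply, opOf_apply,
    opOf_apply, map_sum]
  refine Finset.sum_congr rfl fun j _ => ?_
  rw [hc, DOf_apply]

lemma inner_sgl_right (i : Fin n) (x : Hn) (y : H) :
    (inner ℂ x (sgl i y) : ℂ) = inner ℂ (x i) y := by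
  rw [PiLp.inner_apply]
  simp only [sgl_apply, Pi.single_apply]
  rw [Finset.sum_congr rfl fun k (_ : k ∈ Finset.univ) =>
    apply_ite (fun v : H => (inner ℂ (x k) v : ℂ)) (k = i) y 0]
  simp

lemma exists_factor {M : VonNeumannAlgebra H} (a : Fin n → Fin n → (H →L[ℂ] H))
    (haM : ∀ i j, a i j ∈ M) (hpos : PosOpMatrix a) :
    ∃ b : Fin n → Fin n → (H →L[ℂ] H), (∀ i j, b i j ∈ M) ∧
      ∀ i j, a i j = ∑ k, star (b k i) * b k j := by
  have hA : 0 ≤ opOf a := opOf_nonneg hpos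
  have hAsa : IsSelfAdjoint (opOf a) :=
    ((ContinuousLinearMap.nonneg_iff_isPositive _).mp hA).isSelfAdjoint
  set B := cfc Real.sqrt (opOf a) with hBdef
  have hBsa : IsSelfAdjoint B := cfc_predicate _ _
  have hBB : B * B = opOf a := by
    rw [hBdef, ← cfc_mul _ _ (opOf a) (by fun_prop) (by fun_prop)]
    calc cfc (fun x => Real.sqrt x * Real.sqrt x) (opOf a)
        = cfc (id : ℝ → ℝ) (opOf a) :=
          cfc_congr fun x hx => Real.mul_self_sqrt (spectrum_nonneg_of_nonneg hA hx)
      _ = opOf a := cfc_id ℝ (opOf a)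
  refine ⟨fun k j => prj k ∘L (B ∘L sgl j), fun i j => ?_, fun i j => ?_⟩
  · rw [← VonNeumannAlgebra.commutant_commutant M, VonNeumannAlgebra.mem_commutant_iff]
    intro g hg
    have hcomm : Commute (DOf g) B :=
      commute_cfc _ Real.continuous_sqrt hAsa (commute_DOf_opOf haM hg)
    ext v
    rw [ContinuousLinearMap.mul_apply, ContinuousLinearMap.mul_apply,
      ContinuousLinearMap.comp_apply, ContinuousLinearMap.comp_apply,
      ContinuousLinearMap.comp_apply, ContinuousLinearMap.comp_apply]
    rw [prj_apply, prj_apply]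
    calc g ((B (sgl j v)) i) = (DOf g (B (sgl j v))) i := (DOf_apply g _ i).symm
      _ = (B (DOf g (sgl j v))) i := by
            rw [← ContinuousLinearMap.mul_apply, hcomm.eq, ContinuousLinearMap.mul_apply]
      _ = (B (sgl j (g v))) i := by rw [DOf_sgl]
  · have hadj : ContinuousLinearMap.adjoint B = B := hBsa.adjoint_eq
    refine ContinuousLinearMap.ext fun v => ?_
    refine ext_inner_left ℂ fun u => ?_
    rw [ContinuousLinearMap.sum_apply, inner_sum]
    have term : ∀ k : Fin n,
        (inner ℂ u ((star (prj k ∘L (B ∘L sgl i)) * (prj k ∘L (B ∘L sgl j))) v) : ℂ)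
        = inner ℂ ((B (sgl i u)) k) ((B (sgl j v)) k) := by
      intro k
      rw [ContinuousLinearMap.mul_apply, star_eq_adjoint,
        ContinuousLinearMap.adjoint_inner_right]
      simp only [ContinuousLinearMap.comp_apply, prj_apply]
    rw [Finset.sum_congr rfl fun k _ => term k,
      ← PiLp.inner_apply (𝕜 := ℂ) (B (sgl i u)) (B (sgl j v))]
    have key : ∀ p q : PiLp 2 (fun _ : Fin n => H), (inner ℂ (B p) q : ℂ) = inner ℂ p (B q) := by
      intro p q
      nth_rewrite 1 [← hadj]
      exact ContinuousLinearMap.adjoint_inner_left B q p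
    rw [key, ← ContinuousLinearMap.mul_apply, hBB, inner_opOf]
    have term2 : ∀ k l : Fin n,
        (inner ℂ ((sgl (H := H) i u) k) ((a k l) ((sgl (H := H) j v) l)) : ℂ)
        = (if k = i then 1 else 0) * (if l = j then 1 else 0) * inner ℂ u ((a k l) v) := by
      intro k l
      simp only [sgl_apply, Pi.single_apply]
      split <;> split <;> simp
    simp only [term2]
    simp [Finset.sum_ite_eq]
variable {H : Type*} [NormedAddCommGroup H] [InnerProductSpace ℂ H] [CompleteSpace H]
variable {n : ℕ}

lemma sum_inner_self {m : ℕ} (c : Fin m → H) :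
    ∑ i, ∑ j, (inner ℂ (c i) (c j) : ℂ) = ((‖∑ i, c i‖ ^ 2 : ℝ) : ℂ) := by
  have : ∑ i, ∑ j, (inner ℂ (c i) (c j) : ℂ) = (inner ℂ (∑ i, c i) (∑ j, c j) : ℂ) := by
    rw [sum_inner]
    exact Finset.sum_congr rfl fun i _ => by rw [inner_sum]
  rw [this, inner_self_eq_norm_sq_to_K]
  norm_cast

lemma map_sum_of_additive {M : VonNeumannAlgebra H} {P : (H →L[ℂ] H) → (H →L[ℂ] H)}
    (hP : IsCPMapOn M P) {m : ℕ} (x : Fin m → (H →L[ℂ] H)) (hx : ∀ k, x k ∈ M) :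
    P (∑ k, x k) = ∑ k, P (x k) := by
  have hP0 : P 0 = 0 := by
    have := hP.map_smul 0 1 (one_mem M)
    simpa using this
  classical
  have : ∀ s : Finset (Fin m), P (∑ k ∈ s, x k) = ∑ k ∈ s, P (x k) := by
    intro s
    induction s using Finset.induction with
    | empty => simpa using hP0
    | insert _ _ hns ih =>
        rw [Finset.sum_insert hns, Finset.sum_insert hns, hP.map_add _ (hx _) _
          (sum_mem fun k _ => hx k), ih]
  exact this Finset.univ

lemma lemA {M : VonNeumannAlgebra H} {P : (H →L[ℂ] H) → (H →L[ℂ] H)}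
    (hP : IsCPMapOn M P) {Y : H →L[ℂ] H} {CY : ℝ} (hY : PBound M P Y CY)
    (a : Fin n → Fin n → (H →L[ℂ] H)) (haM : ∀ i j, a i j ∈ M) (hpos : PosOpMatrix a)
    (h : Fin n → H) :
    ∑ i, ∑ j, (inner ℂ (ContinuousLinearMap.adjoint Y (h i))
        (a i j (ContinuousLinearMap.adjoint Y (h j))) : ℂ) ≤
      (CY : ℂ) * ∑ i, ∑ j, (inner ℂ (h i) (P (a i j) (h j)) : ℂ) := by
  obtain ⟨b, hbM, hab⟩ := exists_factor a haM hpos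
  set g : Fin n → H := fun i => ContinuousLinearMap.adjoint Y (h i) with hg
  calc ∑ i, ∑ j, (inner ℂ (g i) (a i j (g j)) : ℂ)
      = ∑ k, ∑ i, ∑ j, (inner ℂ (b k i (g i)) (b k j (g j)) : ℂ) := by
        simp_rw [hab, ContinuousLinearMap.sum_apply, inner_sum, ContinuousLinearMap.mul_apply,
          ContinuousLinearMap.star_eq_adjoint, ContinuousLinearMap.adjoint_inner_right]
        calc ∑ i, ∑ j, ∑ k, (inner ℂ (b k i (g i)) (b k j (g j)) : ℂ)
            = ∑ i, ∑ k, ∑ j, (inner ℂ (b k i (g i)) (b k j (g j)) : ℂ) :=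
              Finset.sum_congr rfl fun i _ => Finset.sum_comm
          _ = ∑ k, ∑ i, ∑ j, (inner ℂ (b k i (g i)) (b k j (g j)) : ℂ) := Finset.sum_comm
    _ = ∑ k, ((‖∑ i, b k i (g i)‖ ^ 2 : ℝ) : ℂ) :=
        Finset.sum_congr rfl fun k _ => sum_inner_self _
    _ ≤ ∑ k, (CY : ℂ) * ∑ i, ∑ j, (inner ℂ (h i) (P (star (b k i) * b k j) (h j)) : ℂ) :=
        Finset.sum_le_sum fun k _ => hY n (b k) (fun i => hbM k i) h
    _ = (CY : ℂ) * ∑ i, ∑ j, (inner ℂ (h i) (P (a i j) (h j)) : ℂ) := by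
        rw [← Finset.mul_sum]
        congr 1
        rw [Finset.sum_comm]
        refine Finset.sum_congr rfl fun i _ => ?_
        rw [Finset.sum_comm]
        refine Finset.sum_congr rfl fun j _ => ?_
        rw [← inner_sum]
        congr 1
        have : ∑ k, P (star (b k i) * b k j) = P (a i j) := by
          rw [hab i j, map_sum_of_additive hP _ fun k => mul_mem (star_mem (hbM k i)) (hbM k j)]
        rw [← this, ContinuousLinearMap.sum_apply]

end PboundAux

end AuxPbound

/-- if `Y` is `P`-bounded with constant `C_Y` and `Z` is `Q`-bounded with
constant `C_Z`, then `YZ` is `(P ∘ Q)`-bounded with constant `C_Y · C_Z`; in particular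
`E_P · E_Q ⊆ E_{P∘Q}`. -/
theorem pbound_mul {H : Type*} [NormedAddCommGroup H] [InnerProductSpace ℂ H]
    [CompleteSpace H] (M : VonNeumannAlgebra H)
    (P Q : (H →L[ℂ] H) → (H →L[ℂ] H))
    (hP : IsUNCPMapOn M P) (hQ : IsUNCPMapOn M Q) :
    (∀ (Y Z : H →L[ℂ] H) (CY CZ : ℝ), PBound M P Y CY → PBound M Q Z CZ →
      PBound M (fun T => P (Q T)) (Y * Z) (CY * CZ)) ∧
    (∀ Y ∈ ArvesonCorrespondence M P, ∀ Z ∈ ArvesonCorrespondence M Q,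
      Y * Z ∈ ArvesonCorrespondence M (fun T => P (Q T))) := by
  have main : ∀ (Y Z : H →L[ℂ] H) (CY CZ : ℝ), PBound M P Y CY → PBound M Q Z CZ →
      PBound M (fun T => P (Q T)) (Y * Z) (CY * CZ) := by
    intro Y Z CY CZ hY hZ n S hS h
    by_cases htriv : ∀ v : H, v = 0
    · have hL : ∑ i, S i (ContinuousLinearMap.adjoint (Y * Z) (h i)) = 0 := htriv _
      have hR : ∀ i j, (inner ℂ (h i) (P (Q (star (S i) * S j)) (h j)) : ℂ) = 0 := fun i j => by
        rw [htriv (h i), inner_zero_left]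
      simp [hL, hR]
    · push_neg at htriv
      obtain ⟨v, hv⟩ := htriv
      have hCZ : 0 ≤ CZ := by
        have h1 := hZ 1 (fun _ => 1) (fun _ => one_mem M) (fun _ => v)
        simp only [Fin.sum_univ_one, star_one, one_mul, hQ.map_one,
          ContinuousLinearMap.one_apply, Finset.sum_const, Finset.card_univ,
          Fintype.card_fin, one_smul, inner_self_eq_norm_sq_to_K] at h1
        have h0 : (0 : ℂ) ≤ ((‖ContinuousLinearMap.adjoint Z v‖ ^ 2 : ℝ) : ℂ) :=
          Complex.zero_le_real.mpr (by positivity)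
        have h2 : (0 : ℂ) ≤ ((CZ * ‖v‖ ^ 2 : ℝ) : ℂ) := by
          refine le_trans h0 (le_trans h1 (le_of_eq ?_))
          norm_cast
          exact (Complex.ofReal_mul _ _).symm
        have h3 : (0 : ℝ) ≤ CZ * ‖v‖ ^ 2 := Complex.zero_le_real.mp h2
        have hvpos : (0 : ℝ) < ‖v‖ ^ 2 := pow_pos (norm_pos_iff.mpr hv) 2
        exact (mul_nonneg_iff_of_pos_right hvpos).mp h3
      set g : Fin n → H := fun i => ContinuousLinearMap.adjoint Y (h i) with hg
      have step1 := hZ n S hS g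
      have hmem : ∀ i j, Q (star (S i) * S j) ∈ M := fun i j =>
        hQ.map_mem _ (mul_mem (star_mem (hS i)) (hS j))
      have hposSS : PosOpMatrix fun i j => star (S i) * S j := by
        intro k
        have he : ∑ i, ∑ j, (inner ℂ (k i) ((star (S i) * S j) (k j)) : ℂ)
            = ((‖∑ i, S i (k i)‖ ^ 2 : ℝ) : ℂ) := by
          rw [← PboundAux.sum_inner_self (fun i => S i (k i))]
          refine Finset.sum_congr rfl fun i _ => Finset.sum_congr rfl fun j _ => ?_
          rw [ContinuousLinearMap.mul_apply, ContinuousLinearMap.star_eq_adjoint,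
            ContinuousLinearMap.adjoint_inner_right]
        rw [he]
        exact Complex.zero_le_real.mpr (by positivity)
      have hpos : PosOpMatrix fun i j => Q (star (S i) * S j) :=
        hQ.cp n _ (fun i j => mul_mem (star_mem (hS i)) (hS j)) hposSS
      have key := PboundAux.lemA hP.toIsCPMapOn hY (fun i j => Q (star (S i) * S j)) hmem hpos h
      have hLHS : ∑ i, S i (ContinuousLinearMap.adjoint (Y * Z) (h i))
          = ∑ i, S i (ContinuousLinearMap.adjoint Z (g i)) := by
        refine Finset.sum_congr rfl fun i _ => ?_
        congr 1
        rw [← ContinuousLinearMap.star_eq_adjoint, star_mul, ContinuousLinearMap.mul_apply,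
          ContinuousLinearMap.star_eq_adjoint, ContinuousLinearMap.star_eq_adjoint]
      calc ((‖∑ i, S i (ContinuousLinearMap.adjoint (Y * Z) (h i))‖ ^ 2 : ℝ) : ℂ)
          = ((‖∑ i, S i (ContinuousLinearMap.adjoint Z (g i))‖ ^ 2 : ℝ) : ℂ) := by rw [hLHS]
        _ ≤ (CZ : ℂ) * ∑ i, ∑ j, (inner ℂ (g i) (Q (star (S i) * S j) (g j)) : ℂ) := step1
        _ ≤ (CZ : ℂ) * ((CY : ℂ) *
              ∑ i, ∑ j, (inner ℂ (h i) (P (Q (star (S i) * S j)) (h j)) : ℂ)) :=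
            mul_le_mul_of_nonneg_left key (by exact_mod_cast hCZ)
        _ = ((CY * CZ : ℝ) : ℂ) *
              ∑ i, ∑ j, (inner ℂ (h i) (P (Q (star (S i) * S j)) (h j)) : ℂ) := by
            push_cast
            ring
  refine ⟨main, ?_⟩
  rintro Y ⟨CY, hCY, hY⟩ Z ⟨CZ, hCZ, hZ⟩
  exact ⟨CY * CZ, mul_nonneg hCY hCZ, main Y Z CY CZ hY hZ⟩
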